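/- Let Λ be a compact metric space, f : Λ → Λ continuous, and suppose there exists a sequence of periodic points (x_n) in Λ whose periodic measures are dense in M_f(Λ), together with a point x ∈ Λ shadowing each x_n on the time interval [a_n, b_n] with error 2^{-n+1}δ, where a_n/(b_n − a_n) → 0 and b_n − a_n is a multiple of the period of x_n. Then M_f(Λ) ⊆ V_f(x), i.e., every f-invariant Borel probability measure on Λ is a weak* accumulation point of the empirical measures of x. -/

import Mathlib

open MeasureTheory Filter Topology
open scoped ENNReal NNReal

variable {Λ : Type*}

section AuxLemmas

open BoundedContinuousFunction

lemma aux_sum_range_shift {M : Type*} [AddCommMonoid M] (F : ℕ → M) (p : ℕ)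
    (hF : ∀ j, F (j + p) = F j) (c : ℕ) :
    ∑ i ∈ Finset.range p, F (c + i) = ∑ i ∈ Finset.range p, F i := by
  induction c with
  | zero => simp
  | succ c ih =>
    rw [← ih]
    cases p with
    | zero => simp
    | succ q =>
      rw [Finset.sum_range_succ (fun i => F (c + 1 + i)) q,
        Finset.sum_range_succ' (fun i => F (c + i)) q]
      congr 1
      · exact Finset.sum_congr rfl fun i _ => by rw [show c + 1 + i = c + (i + 1) by omega]
      · rw [show c + 1 + q = c + (q + 1) by omega, hF c, Nat.add_zero]

lemma aux_sum_Ico_of_periodic (F : ℕ → ℝ) (p : ℕ)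
    (hF : ∀ j, F (j + p) = F j) (c m : ℕ) :
    ∑ j ∈ Finset.Ico c (c + m * p), F j = (m : ℝ) * ∑ i ∈ Finset.range p, F i := by
  induction m with
  | zero => simp
  | succ m ih =>
    have h1 : c ≤ c + m * p := Nat.le_add_right _ _
    have h2 : c + m * p ≤ c + (m + 1) * p := by nlinarith
    rw [← Finset.sum_Ico_consecutive F h1 h2, ih]
    have : ∑ j ∈ Finset.Ico (c + m * p) (c + (m + 1) * p), F j
        = ∑ i ∈ Finset.range p, F i := by
      rw [Finset.sum_Ico_eq_sum_range]
      have hcard : c + (m + 1) * p - (c + m * p) = p := by ring_nf; omega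
      rw [hcard]
      exact aux_sum_range_shift F p hF _
    rw [this]
    push_cast
    ring

lemma aux_map_finsetSum {α β ι : Type*} [MeasurableSpace α] [MeasurableSpace β] {f : α → β}
    (s : Finset ι) (μ : ι → MeasureTheory.Measure α) (hf : Measurable f) :
    (∑ i ∈ s, μ i).map f = ∑ i ∈ s, (μ i).map f := by
  induction s using Finset.cons_induction with
  | empty => simp
  | cons a s ha ih => rw [Finset.sum_cons, Finset.sum_cons, Measure.map_add _ _ hf, ih]

lemma aux_integral_avg_dirac [MetricSpace Λ] [MeasurableSpace Λ] [BorelSpace Λ]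
    (g : Λ →ᵇ ℝ) (F : ℕ → Λ) (k : ℕ) :
    ∫ z, g z ∂(((k : ℕ) : ℝ≥0∞)⁻¹ • ∑ i ∈ Finset.range k, Measure.dirac (F i))
      = (k : ℝ)⁻¹ * ∑ i ∈ Finset.range k, g (F i) := by
  rw [integral_smul_measure, integral_finset_sum_measure]
  · simp [integral_dirac, ENNReal.toReal_inv, smul_eq_mul]
  · intro i _
    exact g.integrable _

end AuxLemmas

/-- Empirical measure `(1/(N+1)) ∑_{j=0}^{N} δ_{f^j y}` (this indexing realizes the
sequence `μ_N` for `N ≥ 1`). -/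
noncomputable def empP [MetricSpace Λ] [MeasurableSpace Λ] [BorelSpace Λ]
    (f : Λ → Λ) (y : Λ) (N : ℕ) : ProbabilityMeasure Λ :=
  ⟨((N + 1 : ℕ) : ℝ≥0∞)⁻¹ • ∑ j ∈ Finset.range (N + 1), Measure.dirac (f^[j] y), by
    constructor
    simp [Measure.smul_apply, ENNReal.inv_mul_cancel]⟩

/-- `V_f(y)`: the set of weak* accumulation points of the empirical measures of `y`. -/
def accPts [MetricSpace Λ] [MeasurableSpace Λ] [BorelSpace Λ] (f : Λ → Λ) (y : Λ) :
    Set (ProbabilityMeasure Λ) :=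
  {μ | MapClusterPt μ atTop (empP f y)}

/-- `M_f(Λ)`: the set of `f`-invariant Borel probability measures. -/
def invProb [MetricSpace Λ] [MeasurableSpace Λ] [BorelSpace Λ] (f : Λ → Λ) :
    Set (ProbabilityMeasure Λ) :=
  {μ | (μ : Measure Λ).map f = μ}

/-- The periodic measure of a periodic point `x` of period `k ≥ 1`. -/
noncomputable def perP [MetricSpace Λ] [MeasurableSpace Λ] [BorelSpace Λ]
    (f : Λ → Λ) (x : Λ) (k : ℕ) (hk : 0 < k) : ProbabilityMeasure Λ :=
  ⟨((k : ℕ) : ℝ≥0∞)⁻¹ • ∑ i ∈ Finset.range k, Measure.dirac (f^[i] x), by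
    constructor
    simp [Measure.smul_apply, ENNReal.inv_mul_cancel, hk.ne']⟩

section AuxLemmas2

open BoundedContinuousFunction

/-- The periodic measure of a genuine periodic point is invariant. -/
lemma aux_perP_mem_invProb [MetricSpace Λ] [MeasurableSpace Λ] [BorelSpace Λ]
    (f : Λ → Λ) (hf : Continuous f) (x : Λ) (k : ℕ) (hk : 0 < k) (hx : f^[k] x = x) :
    perP f x k hk ∈ invProb f := by
  show (perP f x k hk : Measure Λ).map f = (perP f x k hk : Measure Λ)
  show (((k : ℕ) : ℝ≥0∞)⁻¹ • ∑ i ∈ Finset.range k, Measure.dirac (f^[i] x)).map f = _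
  have hmap : (∑ i ∈ Finset.range k, Measure.dirac (f^[i] x)).map f
      = ∑ i ∈ Finset.range k, Measure.dirac (f^[i + 1] x) := by
    rw [aux_map_finsetSum _ _ hf.measurable]
    exact Finset.sum_congr rfl fun i _ => by
      rw [Measure.map_dirac' hf.measurable, ← Function.iterate_succ_apply' f i x]
  rw [Measure.map_smul, hmap]
  congr 1
  have hper : ∀ j, Measure.dirac (f^[j + k] x) = Measure.dirac (f^[j] x) := by
    intro j
    rw [Function.iterate_add_apply, hx]
  have := aux_sum_range_shift (fun j => Measure.dirac (f^[j] x)) k hper 1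
  simp only [add_comm 1] at this
  simp only [← this]

/-- Key topological fact: any invariant measure is a cluster point (along `atTop`)
of any sequence of invariant measures whose range is weak*-dense in the invariant
measures. -/
lemma aux_mapClusterPt_of_dense [MetricSpace Λ] [CompactSpace Λ] [MeasurableSpace Λ]
    [BorelSpace Λ]
    (f : Λ → Λ) (hf : Continuous f) (P : ℕ → ProbabilityMeasure Λ)
    (hPinv : ∀ n, P n ∈ invProb f)
    (hdense : invProb f ⊆ closure (Set.range P))
    (μ : ProbabilityMeasure Λ) (hμ : μ ∈ invProb f) :
    MapClusterPt μ atTop P := by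
  rw [mapClusterPt_iff_frequently]
  intro s hs
  rw [Filter.frequently_atTop]
  intro N
  by_contra hcon
  push_neg at hcon
  by_cases hall : ∀ m, P m = μ
  · exact hcon N le_rfl (by rw [hall N]; exact mem_of_mem_nhds hs)
  push_neg at hall
  obtain ⟨m, hm⟩ := hall
  -- a measurable set where the two measures differ
  obtain ⟨A, hAmeas, hA⟩ : ∃ A, MeasurableSet A ∧
      (P m : Measure Λ) A ≠ (μ : Measure Λ) A := by
    by_contra h
    push_neg at h
    exact hm (Subtype.ext (Measure.ext fun t ht => h t ht))
  -- mixtures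
  set c : ℕ → ℝ≥0∞ := fun k => (((k : ℕ) : ℝ≥0∞) + 2)⁻¹ with hc_def
  have hc_eq : ∀ k, c k = (((k + 2 : ℕ)) : ℝ≥0∞)⁻¹ := fun k => by
    rw [hc_def]; push_cast; ring
  have hc_ne_top : ∀ k, c k ≠ ∞ := fun k => by
    rw [hc_eq]
    exact ENNReal.inv_ne_top.2 (by exact_mod_cast Nat.succ_ne_zero (k + 1))
  have hc_ne_zero : ∀ k, c k ≠ 0 := fun k => by
    rw [hc_eq]
    exact ENNReal.inv_ne_zero.2 (by finiteness)
  have hc_le_one : ∀ k, c k ≤ 1 := fun k => by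
    rw [hc_eq, ENNReal.inv_le_one]
    exact_mod_cast Nat.one_le_iff_ne_zero.2 (Nat.succ_ne_zero (k + 1))
  have hc1_ne_top : ∀ k, (1 : ℝ≥0∞) - c k ≠ ∞ := fun k =>
    (tsub_le_self.trans_lt ENNReal.one_lt_top).ne
  set ν : ℕ → ProbabilityMeasure Λ := fun k =>
    ⟨c k • (P m : Measure Λ) + (1 - c k) • (μ : Measure Λ), by
      constructor
      simp only [Measure.coe_add, Measure.coe_smul, Pi.add_apply, Pi.smul_apply,
        measure_univ, smul_eq_mul, mul_one]
      exact add_tsub_cancel_of_le (hc_le_one k)⟩ with hν_def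
  have hν_coe : ∀ k, (ν k : Measure Λ)
      = c k • (P m : Measure Λ) + (1 - c k) • (μ : Measure Λ) := fun k => rfl
  -- mixtures are invariant
  have hνinv : ∀ k, ν k ∈ invProb f := by
    intro k
    show (ν k : Measure Λ).map f = (ν k : Measure Λ)
    rw [hν_coe, Measure.map_add _ _ hf.measurable, Measure.map_smul, Measure.map_smul,
      hPinv m, hμ]
  -- toReal of c
  have hcr : ∀ k, (c k).toReal = ((k : ℝ) + 2)⁻¹ := by
    intro k
    rw [hc_eq, ENNReal.toReal_inv, ENNReal.toReal_natCast]
    push_cast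
    ring
  have hc1r : ∀ k, ((1 : ℝ≥0∞) - c k).toReal = 1 - ((k : ℝ) + 2)⁻¹ := by
    intro k
    rw [ENNReal.toReal_sub_of_le (hc_le_one k) ENNReal.one_ne_top, hcr, ENNReal.toReal_one]
  have htr0 : Tendsto (fun k : ℕ => ((k : ℝ) + 2)⁻¹) atTop (𝓝 0) := by
    apply Filter.Tendsto.inv_tendsto_atTop
    exact tendsto_atTop_add_const_right _ 2 tendsto_natCast_atTop_atTop
  -- mixtures tend to μ
  have hνtend : Tendsto ν atTop (𝓝 μ) := by
    rw [ProbabilityMeasure.tendsto_iff_forall_integral_tendsto]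
    intro g
    have hint : ∀ k, ∫ z, g z ∂(ν k : Measure Λ)
        = ((k : ℝ) + 2)⁻¹ * ∫ z, g z ∂(P m : Measure Λ)
          + (1 - ((k : ℝ) + 2)⁻¹) * ∫ z, g z ∂(μ : Measure Λ) := by
      intro k
      rw [hν_coe]
      rw [integral_add_measure ((g.integrable _).smul_measure (hc_ne_top k))
        ((g.integrable _).smul_measure (hc1_ne_top k)),
        integral_smul_measure, integral_smul_measure, hcr, hc1r, smul_eq_mul, smul_eq_mul]
    simp only [hint]
    have h1 : Tendsto (fun k : ℕ => (1 : ℝ) - ((k : ℝ) + 2)⁻¹) atTop (𝓝 (1 - 0)) :=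
      (tendsto_const_nhds : Tendsto (fun _ : ℕ => (1 : ℝ)) atTop (𝓝 1)).sub htr0
    have := (htr0.mul_const (∫ z, g z ∂(P m : Measure Λ))).add
      (h1.mul_const (∫ z, g z ∂(μ : Measure Λ)))
    simpa using this
  -- mixtures differ from μ
  have hνne : ∀ k, ν k ≠ μ := by
    intro k h
    apply hA
    have hEq : (ν k : Measure Λ) A = (μ : Measure Λ) A := by rw [h]
    rw [hν_coe] at hEq
    simp only [Measure.coe_add, Measure.coe_smul, Pi.add_apply, Pi.smul_apply,
      smul_eq_mul] at hEq
    set qA := (P m : Measure Λ) A with hqA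
    set mA := (μ : Measure Λ) A with hmA
    have hq_fin : qA ≠ ∞ := measure_ne_top _ _
    have hm_fin : mA ≠ ∞ := measure_ne_top _ _
    have h1 : (c k * qA).toReal + ((1 - c k) * mA).toReal = mA.toReal := by
      rw [← ENNReal.toReal_add (ENNReal.mul_ne_top (hc_ne_top k) hq_fin)
        (ENNReal.mul_ne_top (hc1_ne_top k) hm_fin), hEq]
    rw [ENNReal.toReal_mul, ENNReal.toReal_mul, hcr, hc1r] at h1
    have ht_pos : (0 : ℝ) < ((k : ℝ) + 2)⁻¹ := by positivity
    have h2 : ((k : ℝ) + 2)⁻¹ * qA.toReal = ((k : ℝ) + 2)⁻¹ * mA.toReal := by nlinarith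
    have h3 : qA.toReal = mA.toReal := mul_left_cancel₀ ht_pos.ne' h2
    exact (ENNReal.toReal_eq_toReal_iff' hq_fin hm_fin).mp h3
  -- the finite set of "early" measures
  obtain ⟨U, hUs, hUopen, hμU⟩ := mem_nhds_iff.mp hs
  set Fset : Set (ProbabilityMeasure Λ) := P '' {n | n < N} with hFset
  have hFfin : Fset.Finite := (Set.finite_lt_nat N).image P
  set V : Set (ProbabilityMeasure Λ) := U ∩ (Fset \ {μ})ᶜ with hV
  have hVopen : IsOpen V := hUopen.inter (hFfin.diff (t := {μ})).isClosed.isOpen_compl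
  have hμV : μ ∈ V := ⟨hμU, fun h => h.2 rfl⟩
  obtain ⟨k, hkV⟩ := (hνtend.eventually (hVopen.mem_nhds hμV)).exists
  set W : Set (ProbabilityMeasure Λ) := V \ {μ} with hW
  have hWopen : IsOpen W := hVopen.sdiff isClosed_singleton
  have hνkW : ν k ∈ W := ⟨hkV, hνne k⟩
  have hνk_cl : ν k ∈ closure (Set.range P) := hdense (hνinv k)
  obtain ⟨ρ, hρW, n, rfl⟩ := mem_closure_iff.mp hνk_cl W hWopen hνkW
  rcases lt_or_ge n N with hn | hn
  · have hPF : P n ∈ Fset := ⟨n, hn, rfl⟩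
    exact hρW.1.2 ⟨hPF, hρW.2⟩
  · exact hcon n hn (hUs hρW.1.1)

end AuxLemmas2

section AuxLemmas3

open BoundedContinuousFunction

/-- Core estimate: the difference between the empirical integral of `x` at time `b n`
and the periodic integral of `xs n` tends to `0`. -/
lemma aux_diff_tendsto [MetricSpace Λ] [CompactSpace Λ] [MeasurableSpace Λ] [BorelSpace Λ]
    (f : Λ → Λ) (δ : ℝ) (hδ : 0 < δ)
    (x : Λ) (xs : ℕ → Λ) (p : ℕ → ℕ) (hp : ∀ n, 0 < p n)
    (hper : ∀ n, f^[p n] (xs n) = xs n)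
    (a b : ℕ → ℕ) (hab : ∀ n, a n < b n)
    (hdvd : ∀ n, p n ∣ (b n - a n))
    (hshadow : ∀ n, ∀ j, a n ≤ j → j ≤ b n →
      dist (f^[j] (xs n)) (f^[j] x) < (2 : ℝ) ^ (1 - (n : ℤ)) * δ)
    (hratio : Tendsto (fun n => (a n : ℝ) / ((b n : ℝ) - (a n : ℝ))) atTop (nhds 0))
    (g : Λ →ᵇ ℝ) :
    Tendsto (fun n => (∫ z, g z ∂(empP f x (b n - 1) : Measure Λ))
      - ∫ z, g z ∂(perP f (xs n) (p n) (hp n) : Measure Λ)) atTop (𝓝 0) := by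
  rw [Metric.tendsto_atTop]
  intro ε hε
  -- uniform continuity of g
  have hug : UniformContinuous g :=
    CompactSpace.uniformContinuous_of_continuous g.continuous
  obtain ⟨η, hη_pos, hgη⟩ := Metric.uniformContinuous_iff.mp hug (ε / 2) (by positivity)
  -- the shadowing errors tend to 0
  have h2inv : Tendsto (fun n : ℕ => ((2 : ℝ) ^ n)⁻¹) atTop (𝓝 0) :=
    tendsto_inv_atTop_zero.comp (tendsto_pow_atTop_atTop_of_one_lt one_lt_two)
  have hsh : Tendsto (fun n : ℕ => (2 : ℝ) ^ (1 - (n : ℤ)) * δ) atTop (𝓝 0) := by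
    have h := h2inv.const_mul (2 * δ)
    rw [mul_zero] at h
    exact h.congr fun n => by
      rw [zpow_sub₀ (two_ne_zero), zpow_one, zpow_natCast]; ring
  obtain ⟨N2, hN2⟩ := eventually_atTop.mp (hsh.eventually (gt_mem_nhds hη_pos))
  -- the ratio term is eventually small
  have hrt : Tendsto (fun n => 2 * ‖g‖ * ((a n : ℝ) / ((b n : ℝ) - (a n : ℝ))))
      atTop (𝓝 0) := by
    have h := hratio.const_mul (2 * ‖g‖)
    rwa [mul_zero] at h
  obtain ⟨N1, hN1⟩ := eventually_atTop.mp (hrt.eventually (gt_mem_nhds (half_pos hε)))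
  refine ⟨max N1 N2, fun n hn => ?_⟩
  have hnN1 : N1 ≤ n := le_trans (le_max_left _ _) hn
  have hnN2 : N2 ≤ n := le_trans (le_max_right _ _) hn
  -- basic numbers
  have hba : a n ≤ b n := (hab n).le
  have hbpos : 0 < b n := lt_of_le_of_lt (Nat.zero_le (a n)) (hab n)
  have hbn1 : b n - 1 + 1 = b n := Nat.succ_pred_eq_of_pos hbpos
  set A : ℝ := (a n : ℝ) with hA_def
  set B : ℝ := (b n : ℝ) with hB_def
  have hA0 : 0 ≤ A := Nat.cast_nonneg _
  have hLpos : 0 < B - A := by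
    rw [hA_def, hB_def, sub_pos]
    exact_mod_cast hab n
  have hBpos : 0 < B := by linarith
  -- integral of the empirical measure
  have hE : ∫ z, g z ∂(empP f x (b n - 1) : Measure Λ)
      = B⁻¹ * ∑ j ∈ Finset.range (b n), g (f^[j] x) := by
    have hcoe : (empP f x (b n - 1) : Measure Λ)
        = (((b n : ℕ) : ℝ≥0∞))⁻¹ • ∑ j ∈ Finset.range (b n), Measure.dirac (f^[j] x) := by
      rw [← hbn1]; rfl
    rw [hcoe]
    exact aux_integral_avg_dirac g (fun j => f^[j] x) (b n)
  -- integral of the periodic measure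
  have hJ : ∫ z, g z ∂(perP f (xs n) (p n) (hp n) : Measure Λ)
      = ((p n : ℝ))⁻¹ * ∑ i ∈ Finset.range (p n), g (f^[i] (xs n)) :=
    aux_integral_avg_dirac g (fun i => f^[i] (xs n)) (p n)
  -- periodicity of the orbit sums
  obtain ⟨mq, hmq⟩ := hdvd n
  have hmq_pos : 0 < mq := by
    rcases Nat.eq_zero_or_pos mq with h | h
    · exfalso; rw [h, Nat.mul_zero] at hmq; have := hab n; omega
    · exact h
  have hFper : ∀ j, g (f^[j + p n] (xs n)) = g (f^[j] (xs n)) := fun j => by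
    rw [Function.iterate_add_apply, hper n]
  have hab_mul : a n + mq * p n = b n := by
    have h : mq * p n = b n - a n := by rw [mul_comm]; omega
    omega
  have hsum3 : ∑ j ∈ Finset.Ico (a n) (b n), g (f^[j] (xs n))
      = (mq : ℝ) * ∑ i ∈ Finset.range (p n), g (f^[i] (xs n)) := by
    have := aux_sum_Ico_of_periodic (fun j => g (f^[j] (xs n))) (p n) hFper (a n) mq
    rwa [hab_mul] at this
  have hL_eq : B - A = (p n : ℝ) * (mq : ℝ) := by
    have h1 : ((b n - a n : ℕ) : ℝ) = B - A := by
      rw [hA_def, hB_def, Nat.cast_sub hba]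
    rw [← h1, hmq]
    push_cast
    ring
  have hppos : (0 : ℝ) < (p n : ℝ) := by exact_mod_cast hp n
  have hmqpos : (0 : ℝ) < (mq : ℝ) := by exact_mod_cast hmq_pos
  have hJ2 : ∫ z, g z ∂(perP f (xs n) (p n) (hp n) : Measure Λ)
      = (B - A)⁻¹ * ∑ j ∈ Finset.Ico (a n) (b n), g (f^[j] (xs n)) := by
    rw [hJ, hsum3, hL_eq]
    field_simp
  -- split of the empirical sum
  set S0 : ℝ := ∑ j ∈ Finset.range (a n), g (f^[j] x) with hS0_def
  set S2 : ℝ := ∑ j ∈ Finset.Ico (a n) (b n), g (f^[j] x) with hS2_def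
  set S3 : ℝ := ∑ j ∈ Finset.Ico (a n) (b n), g (f^[j] (xs n)) with hS3_def
  set D : ℝ := ∑ j ∈ Finset.Ico (a n) (b n), |g (f^[j] x) - g (f^[j] (xs n))| with hD_def
  have hsplit : ∑ j ∈ Finset.range (b n), g (f^[j] x) = S0 + S2 := by
    rw [hS0_def, hS2_def, Finset.range_eq_Ico, Finset.range_eq_Ico]
    exact (Finset.sum_Ico_consecutive _ (Nat.zero_le (a n)) hba).symm
  have hgle : ∀ z : Λ, |g z| ≤ ‖g‖ := fun z => by
    rw [← Real.norm_eq_abs]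
    exact g.norm_coe_le_norm z
  have hgnn : (0 : ℝ) ≤ ‖g‖ := norm_nonneg _
  have hS0 : |S0| ≤ A * ‖g‖ := by
    calc |S0| ≤ ∑ j ∈ Finset.range (a n), |g (f^[j] x)| :=
          Finset.abs_sum_le_sum_abs _ _
      _ ≤ ∑ _j ∈ Finset.range (a n), ‖g‖ := Finset.sum_le_sum fun i _ => hgle _
      _ = A * ‖g‖ := by rw [Finset.sum_const, Finset.card_range, nsmul_eq_mul]
  have hcardIco : ((Finset.Ico (a n) (b n)).card : ℝ) = B - A := by
    rw [Nat.card_Ico, Nat.cast_sub hba]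
  have hS2 : |S2| ≤ (B - A) * ‖g‖ := by
    calc |S2| ≤ ∑ j ∈ Finset.Ico (a n) (b n), |g (f^[j] x)| :=
          Finset.abs_sum_le_sum_abs _ _
      _ ≤ ∑ _j ∈ Finset.Ico (a n) (b n), ‖g‖ := Finset.sum_le_sum fun i _ => hgle _
      _ = (B - A) * ‖g‖ := by rw [Finset.sum_const, nsmul_eq_mul, hcardIco]
  have hS23 : |S2 - S3| ≤ D := by
    rw [hS2_def, hS3_def, hD_def, ← Finset.sum_sub_distrib]
    exact Finset.abs_sum_le_sum_abs _ _
  -- the shadowing bound on D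
  have hD : D ≤ (B - A) * (ε / 2) := by
    rw [hD_def]
    calc ∑ j ∈ Finset.Ico (a n) (b n), |g (f^[j] x) - g (f^[j] (xs n))|
        ≤ ∑ _j ∈ Finset.Ico (a n) (b n), (ε / 2) := by
          apply Finset.sum_le_sum
          intro j hj
          rw [Finset.mem_Ico] at hj
          have hdist : dist (f^[j] (xs n)) (f^[j] x) < η :=
            lt_of_lt_of_le (hshadow n j hj.1 hj.2.le) (hN2 n hnN2).le
          rw [dist_comm] at hdist
          have h2 := hgη hdist
          rw [Real.dist_eq] at h2
          exact h2.le
      _ = (B - A) * (ε / 2) := by rw [Finset.sum_const, nsmul_eq_mul, hcardIco]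
  -- assemble
  rw [Real.dist_eq, sub_zero, hE, hJ2, hsplit]
  have hkey : B⁻¹ * (S0 + S2) - (B - A)⁻¹ * S3
      = B⁻¹ * S0 + (B⁻¹ - (B - A)⁻¹) * S2 + (B - A)⁻¹ * (S2 - S3) := by ring
  have hBL : B⁻¹ ≤ (B - A)⁻¹ := inv_anti₀ hLpos (by linarith)
  have hLinv_pos : (0 : ℝ) < (B - A)⁻¹ := inv_pos.mpr hLpos
  have hBinv_pos : (0 : ℝ) < B⁻¹ := inv_pos.mpr hBpos
  have b1 : |B⁻¹ * S0| ≤ (B - A)⁻¹ * (A * ‖g‖) := by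
    rw [abs_mul, abs_of_pos hBinv_pos]
    exact mul_le_mul hBL hS0 (abs_nonneg _) hLinv_pos.le
  have b2 : |(B⁻¹ - (B - A)⁻¹) * S2| ≤ (B - A)⁻¹ * (A * ‖g‖) := by
    rw [abs_mul, abs_of_nonpos (by linarith), neg_sub]
    have hdiff : (B - A)⁻¹ - B⁻¹ = A / ((B - A) * B) := by
      rw [inv_sub_inv hLpos.ne' hBpos.ne', show B - (B - A) = A by ring]
    calc ((B - A)⁻¹ - B⁻¹) * |S2| ≤ ((B - A)⁻¹ - B⁻¹) * ((B - A) * ‖g‖) := by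
          apply mul_le_mul_of_nonneg_left hS2 (by linarith)
      _ = A * ‖g‖ / B := by
          rw [hdiff]
          field_simp
      _ ≤ (B - A)⁻¹ * (A * ‖g‖) := by
          rw [div_eq_mul_inv, mul_comm ((B - A)⁻¹) (A * ‖g‖)]
          apply mul_le_mul_of_nonneg_left (inv_anti₀ hLpos (by linarith))
          positivity
  have b3 : |(B - A)⁻¹ * (S2 - S3)| ≤ ε / 2 := by
    rw [abs_mul, abs_of_pos hLinv_pos]
    calc (B - A)⁻¹ * |S2 - S3| ≤ (B - A)⁻¹ * ((B - A) * (ε / 2)) :=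
          mul_le_mul_of_nonneg_left (hS23.trans hD) hLinv_pos.le
      _ = ε / 2 := by field_simp
  have hterm1 : 2 * ((B - A)⁻¹ * (A * ‖g‖)) < ε / 2 := by
    have := hN1 n hnN1
    have heq : 2 * ‖g‖ * (A / (B - A)) = 2 * ((B - A)⁻¹ * (A * ‖g‖)) := by
      field_simp
    rw [hA_def, hB_def] at heq ⊢
    linarith [heq ▸ this]
  calc |B⁻¹ * (S0 + S2) - (B - A)⁻¹ * S3|
      = |B⁻¹ * S0 + (B⁻¹ - (B - A)⁻¹) * S2 + (B - A)⁻¹ * (S2 - S3)| := by rw [hkey]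
    _ ≤ |B⁻¹ * S0 + (B⁻¹ - (B - A)⁻¹) * S2| + |(B - A)⁻¹ * (S2 - S3)| := abs_add_le _ _
    _ ≤ |B⁻¹ * S0| + |(B⁻¹ - (B - A)⁻¹) * S2| + |(B - A)⁻¹ * (S2 - S3)| := by
        have := abs_add_le (B⁻¹ * S0) ((B⁻¹ - (B - A)⁻¹) * S2)
        linarith
    _ < ε := by linarith

end AuxLemmas3

/-- if the periodic measures of the periodic points `x_n` are dense in
`M_f(Λ)` and `x` shadows each `x_n` on `[a_n, b_n]` with error `2^{-n+1} δ`, where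
`a_n/(b_n - a_n) → 0` and the period of `x_n` divides `b_n - a_n`, then
`M_f(Λ) ⊆ V_f(x)`. -/
theorem invariant_measures_subset_accPts
    [MetricSpace Λ] [CompactSpace Λ] [MeasurableSpace Λ] [BorelSpace Λ]
    (f : Λ → Λ) (hf : Continuous f) (δ : ℝ) (hδ : 0 < δ)
    (x : Λ) (xs : ℕ → Λ) (p : ℕ → ℕ) (hp : ∀ n, 0 < p n)
    (hper : ∀ n, f^[p n] (xs n) = xs n)
    (hdense : invProb f ⊆ closure (Set.range fun n => perP f (xs n) (p n) (hp n)))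
    (a b : ℕ → ℕ) (hab : ∀ n, a n < b n) (hb : StrictMono b)
    (hdvd : ∀ n, p n ∣ (b n - a n))
    (hshadow : ∀ n, ∀ j, a n ≤ j → j ≤ b n →
      dist (f^[j] (xs n)) (f^[j] x) < (2 : ℝ) ^ (1 - (n : ℤ)) * δ)
    (hratio : Tendsto (fun n => (a n : ℝ) / ((b n : ℝ) - (a n : ℝ))) atTop (nhds 0)) :
    invProb f ⊆ accPts f x := by
  intro μ hμ
  set P : ℕ → ProbabilityMeasure Λ := fun n => perP f (xs n) (p n) (hp n) with hP_def
  have hPinv : ∀ n, P n ∈ invProb f := fun n =>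
    aux_perP_mem_invProb f hf (xs n) (p n) (hp n) (hper n)
  have hclus : MapClusterPt μ atTop P :=
    aux_mapClusterPt_of_dense f hf P hPinv hdense μ hμ
  obtain ⟨ψ, hψmono, hψtend⟩ :=
    TopologicalSpace.FirstCountableTopology.tendsto_subseq hclus
  have hψat : Tendsto ψ atTop atTop := hψmono.tendsto_atTop
  -- the empirical measures along the subsequence of times converge to μ
  have hEmp : Tendsto (fun k => empP f x (b (ψ k) - 1)) atTop (𝓝 μ) := by
    rw [ProbabilityMeasure.tendsto_iff_forall_integral_tendsto]
    intro g
    have h1 : Tendsto (fun k => ∫ z, g z ∂(P (ψ k) : Measure Λ)) atTop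
        (𝓝 (∫ z, g z ∂(μ : Measure Λ))) :=
      ProbabilityMeasure.tendsto_iff_forall_integral_tendsto.mp hψtend g
    have h2 : Tendsto (fun k => (∫ z, g z ∂(empP f x (b (ψ k) - 1) : Measure Λ))
        - ∫ z, g z ∂(P (ψ k) : Measure Λ)) atTop (𝓝 0) :=
      (aux_diff_tendsto f δ hδ x xs p hp hper a b hab hdvd hshadow hratio g).comp hψat
    have h3 := h2.add h1
    rw [zero_add] at h3
    exact h3.congr fun k => by ring
  -- the subsequence of times tends to infinity
  have hu : Tendsto (fun k => b (ψ k) - 1) atTop atTop := by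
    apply tendsto_atTop_atTop.2
    intro C
    refine ⟨C + 1, fun k hk => ?_⟩
    have h1 : k ≤ ψ k := hψmono.le_apply
    have h2 : ψ k ≤ b (ψ k) := hb.le_apply
    omega
  -- conclude
  show MapClusterPt μ atTop (empP f x)
  have hle1 : map (fun k => empP f x (b (ψ k) - 1)) atTop ≤ map (empP f x) atTop := by
    rw [show (fun k => empP f x (b (ψ k) - 1)) = (empP f x) ∘ (fun k => b (ψ k) - 1)
      from rfl, ← Filter.map_map]
    exact map_mono hu
  have : (𝓝 μ ⊓ map (empP f x) atTop).NeBot := neBot_of_le (le_inf hEmp hle1)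
  exact this
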